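/- There exist a real number T > 1 and a function β : ℝ → ℝ which is twice differentiable on [T, +∞), satisfies β(t) > 0 for all t ≥ T, solves the ordinary differential equation β''(t) + (1/(4t²))·(1 + 1/(log t)²)·β(t) = 0 for all t ≥ T, and moreover satisfies β(t) − β'(t) ≥ 0 for all t ≥ T. -/

import Mathlib

open Real Set

/-- The equation `β̈ + (1/(4t²))(1 + 1/log²t) β = 0` is non-oscillatory: it has a
positive solution on some half-line `[T, +∞)` (with `T > 1`) which moreover
satisfies `β − β̇ ≥ 0` there. -/
theorem nonoscillatory_positive_solution_with_beta_ge_beta' :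
    ∃ T : ℝ, 1 < T ∧ ∃ β β' β'' : ℝ → ℝ,
      ∀ t ∈ Set.Ici T,
        HasDerivWithinAt β (β' t) (Set.Ici T) t ∧
        HasDerivWithinAt β' (β'' t) (Set.Ici T) t ∧
        0 < β t ∧
        β'' t + (1 / (4 * t ^ 2)) * (1 + 1 / (Real.log t) ^ 2) * β t = 0 ∧
        0 ≤ β t - β' t := by
  refine ⟨2, by norm_num,
    (fun t => Real.sqrt (t * Real.log t)),
    (fun t => (Real.log t + 1) / (2 * Real.sqrt (t * Real.log t))),
    (fun t => -((Real.log t) ^ 2 + 1) /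
      (4 * (t * Real.log t) * Real.sqrt (t * Real.log t))),
    fun t ht => ?_⟩
  simp only [Set.mem_Ici] at ht
  have ht0 : (0:ℝ) < t := by linarith
  have hL6 : (0.6:ℝ) < Real.log t := by
    have h2 : (0.6:ℝ) < Real.log 2 := by
      have := Real.log_two_gt_d9; linarith
    have := Real.log_le_log (by norm_num) ht
    linarith
  have hLpos : 0 < Real.log t := by linarith
  have hf : 0 < t * Real.log t := mul_pos ht0 hLpos
  have hs : 0 < Real.sqrt (t * Real.log t) := Real.sqrt_pos.2 hf
  have hsq : Real.sqrt (t * Real.log t) ^ 2 = t * Real.log t := Real.sq_sqrt hf.le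
  have hm : Real.sqrt t * Real.sqrt (Real.log t) = Real.sqrt (t * Real.log t) :=
    (Real.sqrt_mul ht0.le (Real.log t)).symm
  have hmm : Real.sqrt t ^ 2 * Real.sqrt (Real.log t) ^ 2 = t * Real.log t := by
    rw [Real.sq_sqrt ht0.le, Real.sq_sqrt hLpos.le]
  set L := Real.log t with hLdef
  set s := Real.sqrt (t * Real.log t) with hsdef
  -- derivative of f := t * log t
  have hfd : HasDerivAt (fun x => x * Real.log x) (L + 1) t := by
    have h := (hasDerivAt_id t).mul (Real.hasDerivAt_log ht0.ne')
    refine h.congr_deriv ?_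
    simp only [id, hLdef, one_mul, mul_inv_cancel₀ ht0.ne']
  -- derivative of β
  have hβd : HasDerivAt (fun x => Real.sqrt (x * Real.log x))
      ((L + 1) / (2 * s)) t := by
    have h := (Real.hasDerivAt_sqrt hf.ne').comp t hfd
    refine h.congr_deriv ?_
    rw [hsdef]
    ring
  -- derivative of β'
  have hβ'd : HasDerivAt (fun x => (Real.log x + 1) / (2 * Real.sqrt (x * Real.log x)))
      (-(L ^ 2 + 1) / (4 * (t * L) * s)) t := by
    have hn : HasDerivAt (fun x => Real.log x + 1) (1 / t) t := by
      simpa using (Real.hasDerivAt_log ht0.ne').add_const 1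
    have hd : HasDerivAt (fun x => 2 * Real.sqrt (x * Real.log x))
        (2 * ((L + 1) / (2 * s))) t := hβd.const_mul 2
    have hdenne : 2 * s ≠ 0 := by positivity
    have h := hn.div hd hdenne
    refine h.congr_deriv ?_
    have hLne : L ≠ 0 := hLpos.ne'
    have hsne : s ≠ 0 := hs.ne'
    simp only [← hsdef]
    simp only [← hLdef]
    field_simp
    linear_combination (8*L+4*(L^2+1))*hsq
  refine ⟨hβd.hasDerivWithinAt, hβ'd.hasDerivWithinAt, hs, ?_, ?_⟩
  · have hLne : L ≠ 0 := hLpos.ne'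
    have hsne : s ≠ 0 := hs.ne'
    show -(L^2+1)/(4*(t*L)*s) + 1/(4*t^2)*(1+1/L^2)*s = 0
    field_simp
    linear_combination (L^2+1)*hsq
  · rw [sub_nonneg, div_le_iff₀ (by positivity)]
    nlinarith [hsq]
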